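/- Let 𝒮 = {S_1,…,S_k} be a maximal nested collection with support S ⊆ [n]. Then for every nonempty subset I ⊆ S, the Laurent polynomial Y_I is a rational function with integer coefficients in the elements Y_{S_1},…,Y_{S_k}; that is, inside the field ℚ(A_1,…,A_n,X_1,…,X_n), Y_I lies in the fraction field of the subring ℤ[Y_{S_1},…,Y_{S_k}]. -/

import Mathlib

open MvPolynomial

/-- Reachability inside a subset `U` of vertices, along edges of `E`. -/
def ReachIn {n : ℕ} (E : Fin n → Fin n → Prop) (U : Finset (Fin n)) (a b : Fin n) : Prop :=
  Relation.ReflTransGen (fun x y => E x y ∧ x ∈ U ∧ y ∈ U) a b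

/-- A nonempty subset `I` is strongly connected if any vertex of `I` can reach any
other vertex of `I` by a directed path staying inside `I`. -/
def StronglyConnected {n : ℕ} (E : Fin n → Fin n → Prop) (I : Finset (Fin n)) : Prop :=
  I.Nonempty ∧ ∀ a ∈ I, ∀ b ∈ I, ReachIn E I a b

open Classical in
/-- The strongly connected component of `x` in the induced subgraph on `U`. -/
noncomputable def scc {n : ℕ} (E : Fin n → Fin n → Prop) (U : Finset (Fin n)) (x : Fin n) :
    Finset (Fin n) :=
  U.filter fun y => ReachIn E U x y ∧ ReachIn E U y x

/-- `S ⊕ j` : the strongly connected component of `S ∪ {j}` containing `j`. -/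
noncomputable def oplus {n : ℕ} (E : Fin n → Fin n → Prop) (S : Finset (Fin n)) (j : Fin n) :
    Finset (Fin n) :=
  scc E (insert j S) j

/-- `S ⊖ j = (S ∪ {j}) − (S ⊕ j)`. -/
noncomputable def ominus {n : ℕ} (E : Fin n → Fin n → Prop) (S : Finset (Fin n)) (j : Fin n) :
    Finset (Fin n) :=
  insert j S \ oplus E S j

/-- A family of strongly connected subsets is nested if any two members are nested or
disjoint, and any tuple of pairwise disjoint members are exactly the strongly connected
components of their union. -/
def Nested {n : ℕ} (E : Fin n → Fin n → Prop) (𝒮 : Finset (Finset (Fin n))) : Prop :=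
  (∀ I ∈ 𝒮, StronglyConnected E I) ∧
  (∀ I ∈ 𝒮, ∀ J ∈ 𝒮, I ⊆ J ∨ J ⊆ I ∨ Disjoint I J) ∧
  (∀ 𝒯 ⊆ 𝒮, (∀ I ∈ 𝒯, ∀ J ∈ 𝒯, I ≠ J → Disjoint I J) →
    ∀ I ∈ 𝒯, ∀ x ∈ I, scc E (𝒯.sup id) x = I)

/-- The support of a collection: the union of its members. -/
def nsupport {n : ℕ} (𝒮 : Finset (Finset (Fin n))) : Finset (Fin n) := 𝒮.sup id

/-- A nested collection is maximal (for its support) if the only nested collection with the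
same support containing it is itself. -/
def MaximalNested {n : ℕ} (E : Fin n → Fin n → Prop) (𝒮 : Finset (Finset (Fin n))) : Prop :=
  Nested E 𝒮 ∧ ∀ 𝒮' : Finset (Finset (Fin n)),
    Nested E 𝒮' → nsupport 𝒮' = nsupport 𝒮 → 𝒮 ⊆ 𝒮' → 𝒮' = 𝒮

/-- The ambient field: rational functions in the indeterminates `A_1,…,A_n,X_1,…,X_n`. -/
abbrev Kn (n : ℕ) : Type := FractionRing (MvPolynomial (Fin n ⊕ Fin n) ℤ)

/-- The coefficient `A_i`, as an element of the ambient field. -/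
noncomputable def AA {n : ℕ} (i : Fin n) : Kn n :=
  algebraMap (MvPolynomial (Fin n ⊕ Fin n) ℤ) (Kn n) (X (Sum.inl i))

/-- The initial cluster variable `X_i`, as an element of the ambient field. -/
noncomputable def XX {n : ℕ} (i : Fin n) : Kn n :=
  algebraMap (MvPolynomial (Fin n ⊕ Fin n) ℤ) (Kn n) (X (Sum.inr i))

/-- `f` is acyclic on `I`: the only directed cycles in the graph `{i → f(i) : i ∈ I}`
are loops at fixed points. -/
def IsAcyclicOn {n : ℕ} (I : Finset (Fin n)) (f : Fin n → Fin n) : Prop :=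
  ∀ i ∈ I, ∀ k : ℕ, 0 < k → (∀ r < k, f^[r] i ∈ I) → f^[k] i = i → f i = i

open Classical in
/-- The numerator `N_I` of `Y_I`: the generating function of acyclic functions `f : I → [n]`
(encoded as functions `Fin n → Fin n` fixing every vertex outside `I`), where a fixed point
`i ∈ I` contributes `A_i` and a non-fixed point contributes `X_{f i}`. -/
noncomputable def Ynum {n : ℕ} (E : Fin n → Fin n → Prop) (I : Finset (Fin n)) :
    MvPolynomial (Fin n ⊕ Fin n) ℤ :=
  ∑ f : Fin n → Fin n,
    if (∀ i, i ∉ I → f i = i) ∧ (∀ i ∈ I, f i = i ∨ E i (f i)) ∧ IsAcyclicOn I f then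
      ∏ i ∈ I, if f i = i then X (Sum.inl i) else X (Sum.inr (f i))
    else 0

/-- The Laurent polynomial `Y_I` (with `Y_∅ = 1`). -/
noncomputable def YY {n : ℕ} (E : Fin n → Fin n → Prop) (I : Finset (Fin n)) : Kn n :=
  algebraMap (MvPolynomial (Fin n ⊕ Fin n) ℤ) (Kn n) (Ynum E I) / ∏ i ∈ I, XX i

open Classical in
/-- `P_S^{i,j}`: the sum of `Y_{S − p}` over all simple paths `p : i →_S j` in the graph,
whose intermediate vertices lie in `S`.  A path with `m` edges is encoded as an injective
map `v : Fin (m+1) → Fin n` whose consecutive values are edges. -/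
noncomputable def PP {n : ℕ} (E : Fin n → Fin n → Prop) (S : Finset (Fin n)) (i j : Fin n) :
    Kn n :=
  ∑ m ∈ Finset.range (n + 1), ∑ v : Fin (m + 1) → Fin n,
    if Function.Injective v ∧ v 0 = i ∧ v (Fin.last m) = j ∧
        (∀ r : Fin m, E (v r.castSucc) (v r.succ)) ∧
        (∀ r : Fin (m + 1), r ≠ 0 → r ≠ Fin.last m → v r ∈ S) then
      YY E (S \ Finset.image v Finset.univ)
    else 0

open Classical in
/-- The matrix `𝒴`, with diagonal entries `Y_{{i}}`, entries `−1` at edges of the graph,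
and `0` elsewhere. -/
noncomputable def Ymat {n : ℕ} (E : Fin n → Fin n → Prop) : Matrix (Fin n) (Fin n) (Kn n) :=
  Matrix.of fun i j => if i = j then YY E {i} else if E i j then -1 else 0

section Graph

variable {n : ℕ} {E : Fin n → Fin n → Prop}

lemma reachin_mono {U V : Finset (Fin n)} (hUV : U ⊆ V) {a b : Fin n}
    (h : ReachIn E U a b) : ReachIn E V a b :=
  Relation.ReflTransGen.mono (r := fun x y => E x y ∧ x ∈ U ∧ y ∈ U)
    (p := fun x y => E x y ∧ x ∈ V ∧ y ∈ V)
    (fun x y hxy => ⟨hxy.1, hUV hxy.2.1, hUV hxy.2.2⟩) a b h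

lemma mem_scc {U : Finset (Fin n)} {x y : Fin n} :
    y ∈ scc E U x ↔ y ∈ U ∧ ReachIn E U x y ∧ ReachIn E U y x := by
  classical
  simp [scc]

lemma scc_subset {U : Finset (Fin n)} {x : Fin n} : scc E U x ⊆ U := by
  intro y hy; exact (mem_scc.1 hy).1

lemma mem_scc_self {U : Finset (Fin n)} {x : Fin n} (hx : x ∈ U) : x ∈ scc E U x :=
  mem_scc.2 ⟨hx, Relation.ReflTransGen.refl, Relation.ReflTransGen.refl⟩

lemma reachin_mem_right {U : Finset (Fin n)} {a b : Fin n} (hab : ReachIn E U a b) :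
    a = b ∨ b ∈ U := by
  induction hab with
  | refl => exact Or.inl rfl
  | tail _ h ih => exact Or.inr h.2.2

/-- Key path-refinement: a path between two mutually reachable vertices can be taken
inside the strongly connected component. -/
lemma scc_reach {U : Finset (Fin n)} {x : Fin n} :
    ∀ {a b : Fin n}, ReachIn E U a b → ReachIn E U b x → ReachIn E U x a →
      ReachIn E (scc E U x) a b := by
  intro a b hab
  induction hab with
  | refl => intro _ _; exact Relation.ReflTransGen.refl
  | @tail c b hac hcb ih =>
    intro hbx hxa
    have hcx : ReachIn E U c x := Relation.ReflTransGen.head hcb hbx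
    have hih := ih hcx hxa
    refine hih.tail ⟨hcb.1, ?_, ?_⟩
    · exact mem_scc.2 ⟨hcb.2.1, hxa.trans hac, hcx⟩
    · exact mem_scc.2 ⟨hcb.2.2, (hxa.trans hac).tail hcb, hbx⟩

lemma scc_eq_of_mem {U : Finset (Fin n)} {x y : Fin n}
    (hxy : ReachIn E U x y) (hyx : ReachIn E U y x) : scc E U x = scc E U y := by
  ext z
  simp only [mem_scc]
  constructor
  · rintro ⟨hz, h1, h2⟩; exact ⟨hz, hyx.trans h1, h2.trans hxy⟩
  · rintro ⟨hz, h1, h2⟩; exact ⟨hz, hxy.trans h1, h2.trans hyx⟩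

lemma scc_stronglyConnected {U : Finset (Fin n)} {x : Fin n} (hx : x ∈ U) :
    StronglyConnected E (scc E U x) := by
  refine ⟨⟨x, mem_scc_self hx⟩, ?_⟩
  intro a ha b hb
  rcases mem_scc.1 ha with ⟨haU, hxa, hax⟩
  rcases mem_scc.1 hb with ⟨hbU, hxb, hbx⟩
  have : ReachIn E (scc E U a) a b := scc_reach (hax.trans hxb) (hbx.trans hxa)
    Relation.ReflTransGen.refl
  rwa [scc_eq_of_mem hax hxa] at this

lemma stronglyConnected_subset_scc {U M : Finset (Fin n)} {u : Fin n}
    (hM : StronglyConnected E M) (hMU : M ⊆ U) {x : Fin n} (hxM : x ∈ M)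
    (hxC : x ∈ scc E U u) : M ⊆ scc E U u := by
  intro m hm
  rcases mem_scc.1 hxC with ⟨hxU, hux, hxu⟩
  have h1 : ReachIn E U x m := reachin_mono hMU (hM.2 x hxM m hm)
  have h2 : ReachIn E U m x := reachin_mono hMU (hM.2 m hm x hxM)
  exact mem_scc.2 ⟨hMU hm, hux.trans h1, h2.trans hxu⟩

end Graph
section Pivot

variable {n : ℕ} {E : Fin n → Fin n → Prop} {𝒮 : Finset (Finset (Fin n))}

open Finset in
lemma no_two_uncovered (h𝒮 : MaximalNested E 𝒮) {T : Finset (Fin n)} (hT : T ∈ 𝒮)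
    {j u : Fin n} (hj : j ∈ T) (hu : u ∈ T) (hne : u ≠ j)
    (hjU : ¬∃ T' ∈ 𝒮, j ∈ T' ∧ T' ⊂ T) (huU : ¬∃ T' ∈ 𝒮, u ∈ T' ∧ T' ⊂ T) : False := by
  classical
  obtain ⟨⟨hSC, hNest2, hSCC⟩, hmax⟩ := h𝒮
  set C : Finset (Fin n) := scc E (T.erase j) u with hCdef
  have huTe : u ∈ T.erase j := mem_erase.2 ⟨hne, hu⟩
  have hCsub : C ⊆ T.erase j := scc_subset
  have hCT : C ⊂ T := Finset.ssubset_of_subset_of_ssubset hCsub (erase_ssubset hj)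
  have huC : u ∈ C := mem_scc_self huTe
  have hCnot : C ∉ 𝒮 := fun h => huU ⟨C, h, huC, hCT⟩
  -- classification of members not containing C's points
  have hclass : ∀ M ∈ 𝒮, Disjoint M C → M ⊆ T.erase j ∨ Disjoint M T := by
    intro M hM hMC
    rcases hNest2 M hM T hT with hMT | hTM | hd
    · rcases eq_or_ssubset_of_subset hMT with rfl | hMT'
      · exact absurd (disjoint_left.1 hMC (hCT.subset huC) huC) (fun h => h)
      · left
        intro i hi
        exact mem_erase.2 ⟨fun h => hjU ⟨M, hM, h ▸ hi, hMT'⟩, hMT hi⟩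
    · exact absurd (disjoint_left.1 hMC (hTM (hCT.subset huC)) huC) (fun h => h)
    · exact Or.inr hd
  -- Nestedness of `insert C 𝒮`
  have hnested : Nested E (insert C 𝒮) := by
    refine ⟨?_, ?_, ?_⟩
    · intro I hI
      rcases mem_insert.1 hI with rfl | hI
      · exact scc_stronglyConnected huTe
      · exact hSC I hI
    · -- nesting pairs
      have hCM : ∀ M ∈ 𝒮, C ⊆ M ∨ M ⊆ C ∨ Disjoint C M := by
        intro M hM
        rcases hNest2 M hM T hT with hMT | hTM | hd
        · rcases eq_or_ssubset_of_subset hMT with rfl | hMT'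
          · exact Or.inl hCT.subset
          · have hjM : j ∉ M := fun h => hjU ⟨M, hM, h, hMT'⟩
            have hMe : M ⊆ T.erase j := fun i hi => mem_erase.2 ⟨fun h => hjM (h ▸ hi), hMT hi⟩
            by_cases hd : Disjoint C M
            · exact Or.inr (Or.inr hd)
            · obtain ⟨x, hxC, hxM⟩ := Finset.not_disjoint_iff.1 hd
              exact Or.inr (Or.inl (stronglyConnected_subset_scc (hSC M hM) hMe hxM hxC))
        · exact Or.inl (hCT.subset.trans hTM)
        · exact Or.inr (Or.inr ((hd.mono_right hCT.subset).symm))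
      intro I hI J hJ
      rcases mem_insert.1 hI with rfl | hI <;> rcases mem_insert.1 hJ with rfl | hJ
      · exact Or.inl Finset.Subset.rfl
      · rcases hCM J hJ with h | h | h
        exacts [Or.inl h, Or.inr (Or.inl h), Or.inr (Or.inr h)]
      · rcases hCM I hI with h | h | h
        exacts [Or.inr (Or.inl h), Or.inl h, Or.inr (Or.inr h.symm)]
      · exact hNest2 I hI J hJ
    · -- SCC condition
      intro 𝒯 h𝒯 hdisj I₀ hI₀ x hx
      by_cases hC𝒯 : C ∈ 𝒯
      swap
      · refine hSCC 𝒯 ?_ hdisj I₀ hI₀ x hx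
        intro M hM
        rcases mem_insert.1 (h𝒯 hM) with rfl | h
        · exact absurd hM hC𝒯
        · exact h
      · set 𝒯' := 𝒯.erase C with h𝒯'def
        have h𝒯'sub : 𝒯' ⊆ 𝒯 := erase_subset _ _
        have h𝒯'S : 𝒯' ⊆ 𝒮 := by
          intro M hM
          rcases mem_erase.1 hM with ⟨hMC, hM𝒯⟩
          rcases mem_insert.1 (h𝒯 hM𝒯) with rfl | h
          · exact absurd rfl hMC
          · exact h
        have hdisj' : ∀ I ∈ 𝒯', ∀ J ∈ 𝒯', I ≠ J → Disjoint I J := fun I hI J hJ =>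
          hdisj I (h𝒯'sub hI) J (h𝒯'sub hJ)
        have hclass' : ∀ M ∈ 𝒯', M ⊆ T.erase j ∨ Disjoint M T := by
          intro M hM
          exact hclass M (h𝒯'S hM) (hdisj M (h𝒯'sub hM) C hC𝒯 (mem_erase.1 hM).1)
        set V := 𝒯.sup id with hVdef
        set 𝒯out := 𝒯'.filter (fun M => Disjoint M T) with h𝒯odef
        have h𝒯oS : 𝒯out ⊆ 𝒮 := fun M hM => h𝒯'S (filter_subset _ _ hM)
        have hdisjo : ∀ I ∈ 𝒯out, ∀ J ∈ 𝒯out, I ≠ J → Disjoint I J := fun I hI J hJ =>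
          hdisj' I (filter_subset _ _ hI) J (filter_subset _ _ hJ)
        set G := (insert T 𝒯out).sup id with hGdef
        have hGS : insert T 𝒯out ⊆ 𝒮 := by
          intro M hM
          rcases mem_insert.1 hM with rfl | h
          · exact hT
          · exact h𝒯oS h
        have hGdisj : ∀ I ∈ insert T 𝒯out, ∀ J ∈ insert T 𝒯out, I ≠ J → Disjoint I J := by
          intro I hI J hJ hIJ
          rcases mem_insert.1 hI with rfl | hI <;> rcases mem_insert.1 hJ with rfl | hJ
          · exact absurd rfl hIJ
          · exact ((mem_filter.1 hJ).2).symm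
          · exact (mem_filter.1 hI).2
          · exact hdisjo I hI J hJ hIJ
        have hVmem : ∀ v ∈ V, v ∈ C ∨ ∃ M ∈ 𝒯', v ∈ M := by
          intro v hv
          obtain ⟨M, hM, hvM⟩ := Finset.mem_sup.1 hv
          by_cases hMC : M = C
          · exact Or.inl (hMC ▸ hvM)
          · exact Or.inr ⟨M, mem_erase.2 ⟨hMC, hM⟩, hvM⟩
        have hVG : V ⊆ G := by
          intro v hv
          rcases hVmem v hv with hvC | ⟨M, hM, hvM⟩
          · exact Finset.mem_sup.2 ⟨T, mem_insert_self _ _, hCT.subset hvC⟩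
          · rcases hclass' M hM with hin | hout
            · exact Finset.mem_sup.2 ⟨T, mem_insert_self _ _, erase_subset _ _ (hin hvM)⟩
            · exact Finset.mem_sup.2 ⟨M, mem_insert_of_mem (mem_filter.2 ⟨hM, hout⟩), hvM⟩
        have hsccT : ∀ w z, w ∈ T → z ∈ V → ReachIn E V w z → ReachIn E V z w → z ∈ T := by
          intro w z hwT hzV h1 h2
          have : z ∈ scc E G w := mem_scc.2 ⟨hVG hzV, reachin_mono hVG h1, reachin_mono hVG h2⟩
          rwa [hSCC (insert T 𝒯out) hGS hGdisj T (mem_insert_self _ _) w hwT] at this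
        have hVT : ∀ v ∈ V, v ∈ T → v ∈ T.erase j := by
          intro v hv hvT
          rcases hVmem v hv with hvC | ⟨M, hM, hvM⟩
          · exact hCsub hvC
          · rcases hclass' M hM with hin | hout
            · exact hin hvM
            · exact absurd hvT (disjoint_left.1 hout hvM)
        have hI₀V : I₀ ⊆ V := Finset.le_sup (f := id) hI₀
        have hxV : x ∈ V := hI₀V hx
        -- strong connectivity of I₀
        have hI₀SC : StronglyConnected E I₀ := by
          rcases mem_insert.1 (h𝒯 hI₀) with rfl | h
          · exact scc_stronglyConnected huTe
          · exact hSC I₀ h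
        ext y
        constructor
        swap
        · intro hy
          exact mem_scc.2 ⟨hI₀V hy, reachin_mono hI₀V (hI₀SC.2 x hx y hy),
            reachin_mono hI₀V (hI₀SC.2 y hy x hx)⟩
        intro hy
        obtain ⟨hyV, hxy, hyx⟩ := mem_scc.1 hy
        by_cases hI₀C : I₀ = C
        · -- I₀ = C
          subst hI₀C
          have hxT : x ∈ T := erase_subset _ _ (hCsub hx)
          have hsub : scc E V x ⊆ T.erase j := by
            intro w hw
            obtain ⟨hwV, h1, h2⟩ := mem_scc.1 hw
            exact hVT w hwV (hsccT x w hxT hwV h1 h2)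
          have r1 : ReachIn E (T.erase j) x y :=
            reachin_mono hsub (scc_reach hxy hyx Relation.ReflTransGen.refl)
          have r2 : ReachIn E (T.erase j) y x := by
            refine reachin_mono hsub ?_
            rw [scc_eq_of_mem hxy hyx]
            exact scc_reach hyx hxy Relation.ReflTransGen.refl
          obtain ⟨_, hux, hxu⟩ := mem_scc.1 hx
          exact mem_scc.2 ⟨hsub hy, hux.trans r1, r2.trans hxu⟩
        · have hI₀' : I₀ ∈ 𝒯' := mem_erase.2 ⟨hI₀C, hI₀⟩
          rcases hclass' I₀ hI₀' with hin | hout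
          · -- I₀ inside T
            have hxT : x ∈ T := erase_subset _ _ (hin hx)
            have hsub : scc E V x ⊆ T.erase j := by
              intro w hw
              obtain ⟨hwV, h1, h2⟩ := mem_scc.1 hw
              exact hVT w hwV (hsccT x w hxT hwV h1 h2)
            have hnoC : ∀ w ∈ scc E V x, w ∉ C := by
              intro w hw hwC
              obtain ⟨hwV, h1, h2⟩ := mem_scc.1 hw
              have rx : ReachIn E (T.erase j) x w :=
                reachin_mono hsub (scc_reach h1 h2 Relation.ReflTransGen.refl)
              have rw' : ReachIn E (T.erase j) w x := by
                refine reachin_mono hsub ?_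
                rw [scc_eq_of_mem h1 h2]
                exact scc_reach h2 h1 Relation.ReflTransGen.refl
              obtain ⟨_, huw, hwu⟩ := mem_scc.1 hwC
              have hxC : x ∈ C := mem_scc.2 ⟨hVT x hxV hxT, huw.trans rw', rx.trans hwu⟩
              exact disjoint_left.1 (hdisj I₀ hI₀ C hC𝒯 hI₀C) hx hxC
            have hsub2 : scc E V x ⊆ 𝒯'.sup id := by
              intro w hw
              rcases hVmem w (scc_subset hw) with hwC | ⟨M, hM, hwM⟩
              · exact absurd hwC (hnoC w hw)
              · exact Finset.mem_sup.2 ⟨M, hM, hwM⟩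
            have r1 : ReachIn E (𝒯'.sup id) x y :=
              reachin_mono hsub2 (scc_reach hxy hyx Relation.ReflTransGen.refl)
            have r2 : ReachIn E (𝒯'.sup id) y x := by
              refine reachin_mono hsub2 ?_
              rw [scc_eq_of_mem hxy hyx]
              exact scc_reach hyx hxy Relation.ReflTransGen.refl
            have : y ∈ scc E (𝒯'.sup id) x := mem_scc.2 ⟨hsub2 hy, r1, r2⟩
            rwa [hSCC 𝒯' h𝒯'S hdisj' I₀ hI₀' x hx] at this
          · -- I₀ outside T
            have hxnT : x ∉ T := disjoint_left.1 hout hx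
            have hnoT : ∀ w ∈ scc E V x, w ∉ T := by
              intro w hw hwT
              obtain ⟨hwV, h1, h2⟩ := mem_scc.1 hw
              exact hxnT (hsccT w x hwT hxV h2 h1)
            have hsub3 : scc E V x ⊆ 𝒯out.sup id := by
              intro w hw
              rcases hVmem w (scc_subset hw) with hwC | ⟨M, hM, hwM⟩
              · exact absurd (erase_subset _ _ (hCsub hwC)) (hnoT w hw)
              · rcases hclass' M hM with hin | houtM
                · exact absurd (erase_subset _ _ (hin hwM)) (hnoT w hw)
                · exact Finset.mem_sup.2 ⟨M, mem_filter.2 ⟨hM, houtM⟩, hwM⟩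
            have r1 : ReachIn E (𝒯out.sup id) x y :=
              reachin_mono hsub3 (scc_reach hxy hyx Relation.ReflTransGen.refl)
            have r2 : ReachIn E (𝒯out.sup id) y x := by
              refine reachin_mono hsub3 ?_
              rw [scc_eq_of_mem hxy hyx]
              exact scc_reach hyx hxy Relation.ReflTransGen.refl
            have : y ∈ scc E (𝒯out.sup id) x := mem_scc.2 ⟨hsub3 hy, r1, r2⟩
            rwa [hSCC 𝒯out h𝒯oS hdisjo I₀ (mem_filter.2 ⟨hI₀', hout⟩) x hx] at this
  -- support unchanged
  have hsupp : nsupport (insert C 𝒮) = nsupport 𝒮 := by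
    unfold nsupport
    rw [Finset.sup_insert]
    exact sup_eq_right.2 (le_trans (Finset.le_iff_subset.2 hCT.subset) (Finset.le_sup (f := id) hT))
  have := hmax (insert C 𝒮) hnested hsupp (Finset.subset_insert _ _)
  exact hCnot (this ▸ Finset.mem_insert_self C 𝒮)

open Finset in
lemma exists_pivot (h𝒮 : MaximalNested E 𝒮) {T : Finset (Fin n)} (hT : T ∈ 𝒮) :
    ∃ j ∈ T, ∀ i ∈ T, i ≠ j → ∃ T' ∈ 𝒮, i ∈ T' ∧ T' ⊂ T := by
  classical
  by_cases h : ∃ j ∈ T, ¬∃ T' ∈ 𝒮, j ∈ T' ∧ T' ⊂ T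
  · obtain ⟨j, hj, hjU⟩ := h
    refine ⟨j, hj, ?_⟩
    intro i hi hij
    by_contra hiU
    exact no_two_uncovered h𝒮 hT hj hi hij hjU hiU
  · push_neg at h
    obtain ⟨j, hj⟩ := (h𝒮.1.1 T hT).1
    exact ⟨j, hj, fun i hi _ => h i hi⟩

end Pivot
section Comb

open Finset

variable {n : ℕ}

/-- weight of a function on `I` -/
noncomputable def wgt (I : Finset (Fin n)) (f : Fin n → Fin n) :
    MvPolynomial (Fin n ⊕ Fin n) ℤ :=
  ∏ i ∈ I, if f i = i then X (Sum.inl i) else X (Sum.inr (f i))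

def Adm (E : Fin n → Fin n → Prop) (I : Finset (Fin n)) (f : Fin n → Fin n) : Prop :=
  (∀ i, i ∉ I → f i = i) ∧ (∀ i ∈ I, f i = i ∨ E i (f i))

def Fcond (E : Fin n → Fin n → Prop) (I : Finset (Fin n)) (f : Fin n → Fin n) : Prop :=
  Adm E I f ∧ IsAcyclicOn I f

open Classical in
lemma Ynum_eq (E : Fin n → Fin n → Prop) (I : Finset (Fin n)) :
    Ynum E I = ∑ f : Fin n → Fin n,
      if Fcond E I f then wgt I f else 0 := by
  classical
  unfold Ynum wgt
  apply Finset.sum_congr rfl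
  intro f _
  have h' : ((∀ i, i ∉ I → f i = i) ∧ (∀ i ∈ I, f i = i ∨ E i (f i)) ∧ IsAcyclicOn I f)
      ↔ Fcond E I f := by unfold Fcond Adm; tauto
  by_cases h : Fcond E I f
  · rw [if_pos h, if_pos (h'.2 h)]
  · rw [if_neg h, if_neg (fun hc => h (h'.1 hc))]

/-- support of a function -/
noncomputable def csupp (f : Fin n → Fin n) : Finset (Fin n) :=
  Finset.univ.filter (fun i => f i ≠ i)

lemma mem_csupp {f : Fin n → Fin n} {i : Fin n} : i ∈ csupp f ↔ f i ≠ i := by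
  classical
  simp [csupp]

/-- `h` is a simple directed cycle through `j` inside `I`. -/
def CycF (E : Fin n → Fin n → Prop) (I : Finset (Fin n)) (j : Fin n)
    (h : Fin n → Fin n) : Prop :=
  h j ≠ j ∧ (∃ m, 0 < m ∧ h^[m] j = j) ∧
    (∀ i, h i ≠ i → E i (h i) ∧ ∃ r, h^[r] j = i) ∧ csupp h ⊆ I

open Classical in
noncomputable def Hset (E : Fin n → Fin n → Prop) (I : Finset (Fin n)) (j : Fin n) :
    Finset (Fin n → Fin n) :=
  Finset.univ.filter (CycF E I j)

lemma mem_Hset {E : Fin n → Fin n → Prop} {I : Finset (Fin n)} {j : Fin n}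
    {h : Fin n → Fin n} : h ∈ Hset E I j ↔ CycF E I j h := by
  classical
  simp [Hset]

-- iterate lemmas
lemma iter_fixed {α : Type*} {f : α → α} {x : α} (hx : f x = x) : ∀ s, f^[s] x = x := by
  intro s
  induction s with
  | zero => rfl
  | succ s ih => rw [Function.iterate_succ_apply, hx, ih]

lemma iter_period_mul {α : Type*} {f : α → α} {x : α} {k : ℕ} (hx : f^[k] x = x) :
    ∀ t, f^[k * t] x = x := by
  intro t
  induction t with
  | zero => rfl
  | succ t ih => rw [Nat.mul_succ, Function.iterate_add_apply, hx, ih]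

lemma iter_mod {α : Type*} {f : α → α} {x : α} {k : ℕ} (hx : f^[k] x = x) (s : ℕ) :
    f^[s] x = f^[s % k] x := by
  conv_lhs => rw [← Nat.div_add_mod s k, add_comm, Function.iterate_add_apply,
    iter_period_mul hx]

end Comb
section CycFacts

open Finset Function

variable {n : ℕ} {E : Fin n → Fin n → Prop} {I : Finset (Fin n)} {j : Fin n}
  {h : Fin n → Fin n}

lemma CycF.orbit_moved (hc : CycF E I j h) (r : ℕ) : h (h^[r] j) ≠ h^[r] j := by
  intro hfix
  obtain ⟨m, hm0, hmj⟩ := hc.2.1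
  have habs : ∀ s, h^[s] (h^[r] j) = h^[r] j := iter_fixed hfix
  have h1 : h^[m * (r + 1)] j = j := iter_period_mul hmj _
  have h2 : h^[m * (r + 1)] j = h^[r] j := by
    have hle : r ≤ m * (r + 1) := le_trans (Nat.le_succ r) (Nat.le_mul_of_pos_left _ hm0)
    rw [← Nat.sub_add_cancel hle, Function.iterate_add_apply, habs]
  have heq : h^[r] j = j := by rw [← h2, h1]
  rw [heq] at hfix
  exact hc.1 hfix

lemma CycF.mem_csupp_iff (hc : CycF E I j h) {i : Fin n} :
    i ∈ csupp h ↔ ∃ r, h^[r] j = i := by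
  rw [mem_csupp]
  constructor
  · intro hi; exact (hc.2.2.1 i hi).2
  · rintro ⟨r, rfl⟩; exact hc.orbit_moved r

lemma CycF.j_mem (hc : CycF E I j h) : j ∈ csupp h := mem_csupp.2 hc.1

lemma CycF.csupp_closed (hc : CycF E I j h) {i : Fin n} (hi : i ∈ csupp h) :
    h i ∈ csupp h := by
  obtain ⟨r, rfl⟩ := hc.mem_csupp_iff.1 hi
  exact hc.mem_csupp_iff.2 ⟨r + 1, by rw [Function.iterate_succ_apply']⟩

lemma CycF.iter_csupp (hc : CycF E I j h) {i : Fin n} (hi : i ∈ csupp h) (t : ℕ) :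
    h^[t] i ∈ csupp h := by
  induction t with
  | zero => exact hi
  | succ t ih => rw [Function.iterate_succ_apply']; exact hc.csupp_closed ih

lemma CycF.iter_period (hc : CycF E I j h) {m : ℕ} (hmj : h^[m] j = j) {i : Fin n}
    (hi : i ∈ csupp h) : h^[m] i = i := by
  obtain ⟨r, rfl⟩ := hc.mem_csupp_iff.1 hi
  rw [← Function.iterate_add_apply, add_comm, Function.iterate_add_apply, hmj]

lemma CycF.exists_ret (hc : CycF E I j h) {i : Fin n} (hi : i ∈ csupp h) :
    ∃ s, h^[s] i = j := by
  obtain ⟨r, rfl⟩ := hc.mem_csupp_iff.1 hi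
  obtain ⟨m, hm0, hmj⟩ := hc.2.1
  have hle : r ≤ m * (r + 1) := le_trans (Nat.le_succ r) (Nat.le_mul_of_pos_left _ hm0)
  refine ⟨m * (r + 1) - r, ?_⟩
  rw [← Function.iterate_add_apply, Nat.sub_add_cancel hle, iter_period_mul hmj]

lemma CycF.prod_comp {M : Type*} [CommMonoid M] (hc : CycF E I j h) (φ : Fin n → M) :
    ∏ i ∈ csupp h, φ (h i) = ∏ i ∈ csupp h, φ i := by
  obtain ⟨m, hm0, hmj⟩ := hc.2.1
  refine Finset.prod_nbij' (fun i => h i) (fun i => h^[m - 1] i) ?_ ?_ ?_ ?_ ?_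
  · intro a ha; exact hc.csupp_closed ha
  · intro a ha; exact hc.iter_csupp ha _
  · intro a ha
    show h^[m - 1] (h a) = a
    have h1 : h^[m - 1] (h a) = h^[m - 1 + 1] a := (Function.iterate_succ_apply h (m-1) a).symm
    have h2 : m - 1 + 1 = m := by omega
    rw [h1, h2]
    exact hc.iter_period hmj ha
  · intro a ha
    show h (h^[m - 1] a) = a
    have h1 : h (h^[m - 1] a) = h^[m - 1 + 1] a := (Function.iterate_succ_apply' h (m-1) a).symm
    have h2 : m - 1 + 1 = m := by omega
    rw [h1, h2]
    exact hc.iter_period hmj ha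
  · intro a _; rfl

end CycFacts
section R1sec

open Finset Function

variable {n : ℕ} {E : Fin n → Fin n → Prop} {I : Finset (Fin n)} {j : Fin n}

open Classical in
noncomputable def Dset (E : Fin n → Fin n → Prop) (I : Finset (Fin n)) (j : Fin n) :
    Finset (Fin n → Fin n) :=
  Finset.univ.filter (fun f => Adm E I f ∧ IsAcyclicOn (I.erase j) f ∧ ¬ IsAcyclicOn I f)

lemma mem_Dset {f : Fin n → Fin n} :
    f ∈ Dset E I j ↔ Adm E I f ∧ IsAcyclicOn (I.erase j) f ∧ ¬ IsAcyclicOn I f := by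
  classical
  simp [Dset]

lemma IsAcyclicOn_congr {J : Finset (Fin n)} {f g : Fin n → Fin n}
    (hfg : ∀ i ∈ J, f i = g i) (hf : IsAcyclicOn J f) : IsAcyclicOn J g := by
  intro i hi k hk hwin hper
  have key : ∀ r ≤ k, g^[r] i = f^[r] i := by
    intro r hr
    induction r with
    | zero => rfl
    | succ r ih =>
      have hrk : r < k := lt_of_lt_of_le (Nat.lt_succ_self r) hr
      have h1 : g^[r] i = f^[r] i := ih (le_of_lt hrk)
      rw [Function.iterate_succ_apply', Function.iterate_succ_apply', h1,
        ← hfg _ (h1 ▸ hwin r hrk)]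
  have hwin' : ∀ r < k, f^[r] i ∈ J := fun r hr => key r hr.le ▸ hwin r hr
  have hper' : f^[k] i = i := key k le_rfl ▸ hper
  have := hf i hi k hk hwin' hper'
  rw [← hfg i hi, this]

lemma bad_extract (hj : j ∈ I) {f : Fin n → Fin n} (hAdm : Adm E I f)
    (hacE : IsAcyclicOn (I.erase j) f) (hnac : ¬ IsAcyclicOn I f) :
    ∃ k, 0 < k ∧ f^[k] j = j ∧ f j ≠ j ∧ (∀ r, f^[r] j ∈ I) ∧
      (∀ r, f (f^[r] j) ≠ f^[r] j) := by
  unfold IsAcyclicOn at hnac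
  push_neg at hnac
  obtain ⟨i₀, hi₀, k, hk, hwin, hper, hfi₀⟩ := hnac
  have hr₀ : ∃ r₀, r₀ < k ∧ f^[r₀] i₀ = j := by
    by_contra hcon
    push_neg at hcon
    have hi₀j : i₀ ≠ j := hcon 0 hk
    refine hfi₀ (hacE i₀ (mem_erase.2 ⟨hi₀j, hi₀⟩) k hk ?_ hper)
    intro r hr
    exact mem_erase.2 ⟨hcon r hr, hwin r hr⟩
  obtain ⟨r₀, hr₀k, hr₀⟩ := hr₀
  have hallI : ∀ s, f^[s] i₀ ∈ I := fun s => by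
    rw [iter_mod hper s]; exact hwin _ (Nat.mod_lt _ hk)
  have hperj : f^[k] j = j := by
    rw [← hr₀, ← Function.iterate_add_apply, add_comm k r₀, Function.iterate_add_apply, hper]
  have horbI : ∀ r, f^[r] j ∈ I := fun r => by
    rw [← hr₀, ← Function.iterate_add_apply]; exact hallI _
  have hfj : f j ≠ j := by
    intro hfix
    have hij : i₀ = j := by
      have h1 : f^[k] i₀ = f^[k - r₀] (f^[r₀] i₀) := by
        rw [← Function.iterate_add_apply, Nat.sub_add_cancel hr₀k.le]
      rw [hper, hr₀, iter_fixed hfix] at h1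
      exact h1
    exact hfi₀ (by rw [hij, hfix])
  have hmoved : ∀ s, f (f^[s] j) ≠ f^[s] j := by
    intro s hfix
    have h1 : f^[k * (s + 1)] j = j := iter_period_mul hperj _
    have hle : s ≤ k * (s + 1) := le_trans (Nat.le_succ s) (Nat.le_mul_of_pos_left _ hk)
    have h2 : f^[k * (s + 1)] j = f^[s] j := by
      rw [← Nat.sub_add_cancel hle, Function.iterate_add_apply, iter_fixed hfix]
    have h3 : f^[s] j = j := by rw [← h2, h1]
    rw [h3] at hfix
    exact hfj hfix
  exact ⟨k, hk, hperj, hfj, horbI, hmoved⟩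

/-- gluing a function at `j` with a function off `j` -/
def glueF (j : Fin n) (f₁ f₂ : Fin n → Fin n) : Fin n → Fin n :=
  fun i => if i = j then f₁ j else f₂ i

def part1 (j : Fin n) (f : Fin n → Fin n) : Fin n → Fin n :=
  fun i => if i = j then f j else i

def part2 (j : Fin n) (f : Fin n → Fin n) : Fin n → Fin n :=
  fun i => if i = j then j else f i

@[simp] lemma glueF_self {f₁ f₂ : Fin n → Fin n} : glueF j f₁ f₂ j = f₁ j := by
  simp [glueF]

lemma glueF_ne {f₁ f₂ : Fin n → Fin n} {i : Fin n} (h : i ≠ j) : glueF j f₁ f₂ i = f₂ i := by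
  simp [glueF, h]

@[simp] lemma part1_self {f : Fin n → Fin n} : part1 j f j = f j := by simp [part1]

lemma part1_ne {f : Fin n → Fin n} {i : Fin n} (h : i ≠ j) : part1 j f i = i := by
  simp [part1, h]

@[simp] lemma part2_self {f : Fin n → Fin n} : part2 j f j = j := by simp [part2]

lemma part2_ne {f : Fin n → Fin n} {i : Fin n} (h : i ≠ j) : part2 j f i = f i := by
  simp [part2, h]

lemma acyclicOn_singleton (j : Fin n) (g : Fin n → Fin n) (hg : ∀ i, i ≠ j → g i = i) :
    IsAcyclicOn {j} g := by
  intro i hi k hk hwin hper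
  have hi' : i = j := mem_singleton.1 hi
  by_cases hgj : g j = j
  · rw [hi']; exact hgj
  · exfalso
    have habs : ∀ s, 0 < s → g^[s] j = g j := by
      intro s hs
      induction s with
      | zero => exact absurd hs (lt_irrefl 0)
      | succ s ih =>
        rcases Nat.eq_zero_or_pos s with rfl | hs'
        · rw [Function.iterate_one]
        · rw [Function.iterate_succ_apply', ih hs', hg (g j) hgj]
    rw [hi', habs k hk] at hper
    exact hgj hper

lemma wgt_glue (hj : j ∈ I) (f₁ f₂ : Fin n → Fin n) :
    wgt I (glueF j f₁ f₂) = wgt {j} f₁ * wgt (I.erase j) f₂ := by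
  unfold wgt
  rw [← Finset.mul_prod_erase I _ hj, Finset.prod_singleton, glueF_self]
  congr 1
  refine Finset.prod_congr rfl fun i hi => ?_
  rw [glueF_ne (mem_erase.1 hi).1]

open Classical in
lemma R1 (hj : j ∈ I) :
    Ynum E {j} * Ynum E (I.erase j) =
      ∑ f ∈ Finset.univ.filter (fun f : Fin n → Fin n =>
        Adm E I f ∧ IsAcyclicOn (I.erase j) f), wgt I f := by
  classical
  rw [Ynum_eq, Ynum_eq, ← Finset.sum_filter, ← Finset.sum_filter, Finset.sum_mul_sum,
    ← Finset.sum_product']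
  refine (Finset.sum_nbij'
    (fun f => (part1 j f, part2 j f))
    (fun p => glueF j p.1 p.2)
    ?_ ?_ ?_ ?_ ?_).symm
  · -- backward membership : f in target gives parts in filters
    intro f hf
    obtain ⟨⟨ha, hb⟩, hc⟩ := (Finset.mem_filter.1 hf).2
    rw [Finset.mem_product]
    constructor
    · refine Finset.mem_filter.2 ⟨Finset.mem_univ _, ⟨?_, ?_⟩, ?_⟩
      · intro i hi
        exact part1_ne (fun he => hi (he ▸ mem_singleton_self j))
      · intro i hi
        show part1 j f i = i ∨ E i (part1 j f i)
        rw [mem_singleton.1 hi, part1_self]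
        exact hb j hj
      · exact acyclicOn_singleton j _ (fun i hi => part1_ne hi)
    · refine Finset.mem_filter.2 ⟨Finset.mem_univ _, ⟨?_, ?_⟩, ?_⟩
      · intro i hi
        show part2 j f i = i
        by_cases hij : i = j
        · rw [hij, part2_self]
        · rw [part2_ne hij]
          exact ha i (fun hiI => hi (mem_erase.2 ⟨hij, hiI⟩))
      · intro i hi
        show part2 j f i = i ∨ E i (part2 j f i)
        rw [part2_ne (mem_erase.1 hi).1]
        exact hb i (mem_erase.1 hi).2
      · exact IsAcyclicOn_congr (f := f) (fun i hi => (part2_ne (mem_erase.1 hi).1).symm) hc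
  · -- forward membership
    rintro ⟨f₁, f₂⟩ hp
    rw [Finset.mem_product] at hp
    obtain ⟨h1, h2⟩ := hp
    obtain ⟨⟨h1a, h1b⟩, h1c⟩ := (Finset.mem_filter.1 h1).2
    obtain ⟨⟨h2a, h2b⟩, h2c⟩ := (Finset.mem_filter.1 h2).2
    dsimp only at h1a h1b h1c h2a h2b h2c ⊢
    refine Finset.mem_filter.2 ⟨Finset.mem_univ _, ⟨?_, ?_⟩, ?_⟩
    · intro i hi
      have hij : i ≠ j := fun he => hi (he ▸ hj)
      rw [glueF_ne hij]
      exact h2a i (fun hie => hi (mem_of_mem_erase hie))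
    · intro i hi
      by_cases hij : i = j
      · rw [hij, glueF_self]
        exact h1b j (mem_singleton_self j)
      · rw [glueF_ne hij]
        exact h2b i (mem_erase.2 ⟨hij, hi⟩)
    · exact IsAcyclicOn_congr (f := f₂)
        (fun i hi => (glueF_ne (mem_erase.1 hi).1).symm) h2c
  · -- left inverse : glue (parts f) = f
    intro f _
    dsimp only
    funext i
    by_cases hij : i = j
    · rw [hij, glueF_self, part1_self]
    · rw [glueF_ne hij, part2_ne hij]
  · -- right inverse
    rintro ⟨f₁, f₂⟩ hp
    rw [Finset.mem_product] at hp
    obtain ⟨h1, h2⟩ := hp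
    obtain ⟨⟨h1a, _⟩, _⟩ := (Finset.mem_filter.1 h1).2
    obtain ⟨⟨h2a, _⟩, _⟩ := (Finset.mem_filter.1 h2).2
    dsimp only at h1a h2a ⊢
    have e1 : part1 j (glueF j f₁ f₂) = f₁ := by
      funext i
      by_cases hij : i = j
      · rw [hij, part1_self, glueF_self]
      · rw [part1_ne hij]
        exact (h1a i (by simp [hij])).symm
    have e2 : part2 j (glueF j f₁ f₂) = f₂ := by
      funext i
      by_cases hij : i = j
      · rw [hij, part2_self]
        exact (h2a j (by simp)).symm
      · rw [part2_ne hij, glueF_ne hij]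
    show (part1 j (glueF j f₁ f₂), part2 j (glueF j f₁ f₂)) = (f₁, f₂)
    rw [e1, e2]
  · -- values
    intro f hf
    show wgt I f = wgt {j} (part1 j f) * wgt (I.erase j) (part2 j f)
    rw [← wgt_glue hj]
    congr 1
    funext i
    by_cases hij : i = j
    · rw [hij, glueF_self, part1_self]
    · rw [glueF_ne hij, part2_ne hij]

end R1sec
section R3sec

open Finset Function

variable {n : ℕ} {E : Fin n → Fin n → Prop} {I : Finset (Fin n)} {j : Fin n}

lemma acyclic_anti {J I : Finset (Fin n)} {f : Fin n → Fin n} (hJI : J ⊆ I)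
    (hf : IsAcyclicOn I f) : IsAcyclicOn J f :=
  fun i hi k hk hwin hper => hf i (hJI hi) k hk (fun r hr => hJI (hwin r hr)) hper

open Classical in
lemma R2 :
    ∑ f ∈ Finset.univ.filter (fun f : Fin n → Fin n =>
        Adm E I f ∧ IsAcyclicOn (I.erase j) f), wgt I f
      = Ynum E I + ∑ f ∈ Dset E I j, wgt I f := by
  classical
  rw [Ynum_eq, ← Finset.sum_filter]
  rw [← Finset.sum_filter_add_sum_filter_not
    (Finset.univ.filter (fun f : Fin n → Fin n => Adm E I f ∧ IsAcyclicOn (I.erase j) f))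
    (fun f => IsAcyclicOn I f) (wgt I)]
  congr 1
  · congr 1
    rw [Finset.filter_filter]
    apply Finset.filter_congr
    intro f _
    unfold Fcond
    constructor
    · rintro ⟨⟨h1, _⟩, h3⟩; exact ⟨h1, h3⟩
    · rintro ⟨h1, h3⟩; exact ⟨⟨h1, acyclic_anti (Finset.erase_subset _ _) h3⟩, h3⟩
  · congr 1
    rw [Finset.filter_filter]
    unfold Dset
    apply Finset.filter_congr
    intro f _
    tauto

open Classical in
noncomputable def hpart (j : Fin n) (f : Fin n → Fin n) : Fin n → Fin n :=
  fun i => if (∃ r, f^[r] j = i) then f i else i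

open Classical in
noncomputable def gpart (j : Fin n) (f : Fin n → Fin n) : Fin n → Fin n :=
  fun i => if (∃ r, f^[r] j = i) then i else f i

noncomputable def combine (h g : Fin n → Fin n) : Fin n → Fin n :=
  fun i => if h i ≠ i then h i else g i

lemma hpart_orb {f : Fin n → Fin n} {i : Fin n} (h : ∃ r, f^[r] j = i) :
    hpart j f i = f i := by
  classical
  simp only [hpart, if_pos h]

lemma hpart_norb {f : Fin n → Fin n} {i : Fin n} (h : ¬ ∃ r, f^[r] j = i) :
    hpart j f i = i := by
  classical
  simp only [hpart, if_neg h]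

lemma gpart_orb {f : Fin n → Fin n} {i : Fin n} (h : ∃ r, f^[r] j = i) :
    gpart j f i = i := by
  classical
  simp only [gpart, if_pos h]

lemma gpart_norb {f : Fin n → Fin n} {i : Fin n} (h : ¬ ∃ r, f^[r] j = i) :
    gpart j f i = f i := by
  classical
  simp only [gpart, if_neg h]

lemma combine_supp {h g : Fin n → Fin n} {i : Fin n} (hi : h i ≠ i) :
    combine h g i = h i := by
  simp only [combine, if_pos hi]

lemma combine_nsupp {h g : Fin n → Fin n} {i : Fin n} (hi : h i = i) :
    combine h g i = g i := by
  simp only [combine, ne_eq, hi, not_true_eq_false, if_neg, ite_false, not_false_eq_true]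

/-- Facts about a function in `Dset`. -/
lemma forward_props (hj : j ∈ I) {f : Fin n → Fin n} (hAdm : Adm E I f)
    (hacE : IsAcyclicOn (I.erase j) f) (hnac : ¬ IsAcyclicOn I f) :
    CycF E I j (hpart j f) ∧ Fcond E (I \ csupp (hpart j f)) (gpart j f) ∧
      combine (hpart j f) (gpart j f) = f ∧
      wgt I f = (∏ i ∈ csupp (hpart j f), X (Sum.inr ((hpart j f) i))) *
        wgt (I \ csupp (hpart j f)) (gpart j f) := by
  classical
  obtain ⟨k, hk, hperj, hfj, horbI, hmoved⟩ := bad_extract hj hAdm hacE hnac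
  -- orbit points are moved by f
  have hmv : ∀ i, (∃ r, f^[r] j = i) → f i ≠ i := by
    rintro i ⟨r, rfl⟩; exact hmoved r
  -- membership in csupp (hpart j f)
  have hmemc : ∀ i, i ∈ csupp (hpart j f) ↔ ∃ r, f^[r] j = i := by
    intro i
    rw [mem_csupp]
    constructor
    · intro hi
      by_contra hcon
      exact hi (hpart_norb hcon)
    · intro hex
      rw [hpart_orb hex]
      exact hmv i hex
  have hcI : csupp (hpart j f) ⊆ I := by
    intro i hi
    obtain ⟨r, rfl⟩ := (hmemc i).1 hi
    exact horbI r
  have hiter : ∀ r, (hpart j f)^[r] j = f^[r] j := by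
    intro r
    induction r with
    | zero => rfl
    | succ r ih =>
      rw [Function.iterate_succ_apply', Function.iterate_succ_apply', ih,
        hpart_orb (show ∃ s, f^[s] j = f^[r] j from ⟨r, rfl⟩)]
  have hCyc : CycF E I j (hpart j f) := by
    refine ⟨?_, ⟨k, hk, ?_⟩, ?_, hcI⟩
    · rw [hpart_orb (show ∃ r, f^[r] j = j from ⟨0, rfl⟩)]; exact hfj
    · rw [hiter]; exact hperj
    · intro i hi
      have hex : ∃ r, f^[r] j = i := by
        by_contra hcon
        exact hi (hpart_norb hcon)
      obtain ⟨r, hr⟩ := hex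
      rw [hpart_orb ⟨r, hr⟩]
      constructor
      · rcases hAdm.2 i (hr ▸ horbI r) with h | h
        · exact absurd h (hmv i ⟨r, hr⟩)
        · exact h
      · exact ⟨r, by rw [hiter, hr]⟩
  refine ⟨hCyc, ⟨⟨?_, ?_⟩, ?_⟩, ?_, ?_⟩
  · -- gpart fixes outside I \ c
    intro i hi
    by_cases hex : ∃ r, f^[r] j = i
    · exact gpart_orb hex
    · rw [gpart_norb hex]
      refine hAdm.1 i (fun hiI => hi (Finset.mem_sdiff.2 ⟨hiI, ?_⟩))
      rw [hmemc]; exact hex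
  · -- gpart edge condition
    intro i hi
    obtain ⟨hiI, hic⟩ := Finset.mem_sdiff.1 hi
    rw [gpart_norb (fun hex => hic ((hmemc i).2 hex))]
    exact hAdm.2 i hiI
  · -- gpart acyclic on I \ c
    intro i hi k' hk' hwin hper
    obtain ⟨hiI, hic⟩ := Finset.mem_sdiff.1 hi
    have hnex : ¬ ∃ r, f^[r] j = i := fun hex => hic ((hmemc i).2 hex)
    have key : ∀ r ≤ k', (gpart j f)^[r] i = f^[r] i := by
      intro r hr
      induction r with
      | zero => rfl
      | succ r ih =>
        have hrk : r < k' := lt_of_lt_of_le (Nat.lt_succ_self r) hr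
        have h1 := ih (le_of_lt hrk)
        have h2 : (gpart j f)^[r] i ∈ I \ csupp (hpart j f) := hwin r hrk
        rw [Function.iterate_succ_apply', Function.iterate_succ_apply', h1,
          ← h1, gpart_norb (fun hex => (Finset.mem_sdiff.1 h2).2 ((hmemc _).2 hex)), h1]
    have hwin' : ∀ r < k', f^[r] i ∈ I.erase j := by
      intro r hr
      have h2 := hwin r hr
      rw [key r hr.le] at h2
      obtain ⟨h2a, h2b⟩ := Finset.mem_sdiff.1 h2
      refine Finset.mem_erase.2 ⟨?_, h2a⟩
      intro he
      exact h2b ((hmemc _).2 ⟨0, he.symm⟩)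
    have hper' : f^[k'] i = i := by rw [← key k' le_rfl, hper]
    have hij : i ≠ j := fun he => hnex ⟨0, he.symm⟩
    have := hacE i (Finset.mem_erase.2 ⟨hij, hiI⟩) k' hk' hwin' hper'
    rw [gpart_norb hnex, this]
  · -- combine = f
    funext i
    by_cases hex : ∃ r, f^[r] j = i
    · rw [combine_supp (by rw [hpart_orb hex]; exact hmv i hex), hpart_orb hex]
    · rw [combine_nsupp (hpart_norb hex), gpart_norb hex]
  · -- weight splitting
    unfold wgt
    rw [← Finset.prod_sdiff hcI, mul_comm]
    congr 1
    · refine Finset.prod_congr rfl fun i hi => ?_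
      obtain ⟨r, hr⟩ := (hmemc i).1 hi
      rw [if_neg (hmv i ⟨r, hr⟩), hpart_orb ⟨r, hr⟩]
    · refine Finset.prod_congr rfl fun i hi => ?_
      have hnex : ¬ ∃ r, f^[r] j = i := fun hex => (Finset.mem_sdiff.1 hi).2 ((hmemc i).2 hex)
      rw [gpart_norb hnex]

/-- Facts about the gluing of a cycle and an acyclic function. -/
lemma backward_props (hj : j ∈ I) {h g : Fin n → Fin n} (hc : CycF E I j h)
    (hg : Fcond E (I \ csupp h) g) :
    (Adm E I (combine h g) ∧ IsAcyclicOn (I.erase j) (combine h g) ∧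
      ¬ IsAcyclicOn I (combine h g)) ∧
      hpart j (combine h g) = h ∧ gpart j (combine h g) = g := by
  classical
  set φ := combine h g with hφ
  have hφc : ∀ i ∈ csupp h, φ i = h i := fun i hi => combine_supp (mem_csupp.1 hi)
  have hφn : ∀ i, i ∉ csupp h → φ i = g i := fun i hi =>
    combine_nsupp (by by_contra hcon; exact hi (mem_csupp.2 hcon))
  have hiterc : ∀ t, ∀ i ∈ csupp h, φ^[t] i = h^[t] i := by
    intro t
    induction t with
    | zero => intro i _; rfl
    | succ t ih =>
      intro i hi
      rw [Function.iterate_succ_apply', Function.iterate_succ_apply', ih i hi,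
        hφc _ (hc.iter_csupp hi t)]
  have hAdm : Adm E I φ := by
    constructor
    · intro i hi
      have hic : i ∉ csupp h := fun hmem => hi (hc.2.2.2 hmem)
      rw [hφn i hic]
      exact hg.1.1 i (fun hmem => hi (Finset.mem_sdiff.1 hmem).1)
    · intro i hiI
      by_cases hic : i ∈ csupp h
      · rw [hφc i hic]
        exact Or.inr (hc.2.2.1 i (mem_csupp.1 hic)).1
      · rw [hφn i hic]
        exact hg.1.2 i (Finset.mem_sdiff.2 ⟨hiI, hic⟩)
  have hacE : IsAcyclicOn (I.erase j) φ := by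
    intro i hi k hk hwin hper
    by_cases hic : i ∈ csupp h
    · exfalso
      obtain ⟨s, hs⟩ := hc.exists_ret hic
      have hperh : h^[k] i = i := by rw [← hiterc k i hic, hper]
      have hsj : h^[s % k] i = j := by rw [← iter_mod hperh s, hs]
      have hwins := hwin (s % k) (Nat.mod_lt _ hk)
      rw [hiterc _ i hic, hsj] at hwins
      exact (Finset.mem_erase.1 hwins).1 rfl
    · have hstay : ∀ r ≤ k, φ^[r] i ∉ csupp h := by
        intro r hr hmem
        have hclosed : ∀ t, ∀ v ∈ csupp h, φ^[t] v ∈ csupp h := by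
          intro t
          induction t with
          | zero => intro v hv; exact hv
          | succ t ih =>
            intro v hv
            rw [Function.iterate_succ_apply', hφc _ (ih v hv)]
            · exact hc.csupp_closed (ih v hv)
        have : φ^[k] i ∈ csupp h := by
          rw [← Nat.sub_add_cancel hr, Function.iterate_add_apply]
          exact hclosed _ _ hmem
        rw [hper] at this
        exact hic this
      have key : ∀ r ≤ k, φ^[r] i = g^[r] i := by
        intro r hr
        induction r with
        | zero => rfl
        | succ r ih =>
          have hrk : r < k := lt_of_lt_of_le (Nat.lt_succ_self r) hr
          have h1 := ih (le_of_lt hrk)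
          rw [Function.iterate_succ_apply', Function.iterate_succ_apply', ← h1,
            hφn _ (hstay r hrk.le)]
      have hwin' : ∀ r < k, g^[r] i ∈ I \ csupp h := by
        intro r hr
        rw [← key r hr.le]
        exact Finset.mem_sdiff.2 ⟨Finset.mem_of_mem_erase (hwin r hr), hstay r hr.le⟩
      have hper' : g^[k] i = i := by rw [← key k le_rfl, hper]
      have hiIc : i ∈ I \ csupp h :=
        Finset.mem_sdiff.2 ⟨Finset.mem_of_mem_erase hi, hic⟩
      have := hg.2 i hiIc k hk hwin' hper'
      rw [hφn i hic, this]
  have hnac : ¬ IsAcyclicOn I φ := by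
    intro hac
    obtain ⟨m, hm, hmj⟩ := hc.2.1
    have hwin : ∀ r < m, φ^[r] j ∈ I := by
      intro r _
      rw [hiterc r j hc.j_mem]
      exact hc.2.2.2 (hc.iter_csupp hc.j_mem r)
    have hper : φ^[m] j = j := by rw [hiterc m j hc.j_mem, hmj]
    have := hac j hj m hm hwin hper
    rw [hφc j hc.j_mem] at this
    exact hc.1 this
  have horb : ∀ i, (∃ r, φ^[r] j = i) ↔ i ∈ csupp h := by
    intro i
    constructor
    · rintro ⟨r, rfl⟩
      rw [hiterc r j hc.j_mem]
      exact hc.iter_csupp hc.j_mem r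
    · intro hi
      obtain ⟨r, hr⟩ := (hc.2.2.1 i (mem_csupp.1 hi)).2
      exact ⟨r, by rw [hiterc r j hc.j_mem, hr]⟩
  refine ⟨⟨hAdm, hacE, hnac⟩, ?_, ?_⟩
  · funext i
    by_cases hic : i ∈ csupp h
    · rw [hpart_orb ((horb i).2 hic), hφc i hic]
    · rw [hpart_norb (fun hex => hic ((horb i).1 hex))]
      by_contra hcon
      exact hic (mem_csupp.2 (fun he => hcon he.symm))
  · funext i
    by_cases hic : i ∈ csupp h
    · rw [gpart_orb ((horb i).2 hic)]
      exact (hg.1.1 i (fun hmem => (Finset.mem_sdiff.1 hmem).2 hic)).symm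
    · rw [gpart_norb (fun hex => hic ((horb i).1 hex)), hφn i hic]

end R3sec
section KeyPoly

open Finset Function

variable {n : ℕ} {E : Fin n → Fin n → Prop} {I : Finset (Fin n)} {j : Fin n}

open Classical in
lemma R3 (hj : j ∈ I) :
    ∑ f ∈ Dset E I j, wgt I f =
      ∑ h ∈ Hset E I j, (∏ i ∈ csupp h, X (Sum.inr (h i))) * Ynum E (I \ csupp h) := by
  classical
  have step1 : ∀ h : Fin n → Fin n,
      (∏ i ∈ csupp h, X (Sum.inr (h i))) * Ynum E (I \ csupp h)
      = ∑ g ∈ Finset.univ.filter (fun g => Fcond E (I \ csupp h) g),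
          (∏ i ∈ csupp h, X (Sum.inr (h i))) * wgt (I \ csupp h) g := by
    intro h
    rw [Ynum_eq, ← Finset.sum_filter, Finset.mul_sum]
  rw [Finset.sum_congr rfl (fun h _ => step1 h), Finset.sum_sigma']
  refine Finset.sum_nbij' (fun f => ⟨hpart j f, gpart j f⟩)
    (fun p => combine p.1 p.2) ?_ ?_ ?_ ?_ ?_
  · intro f hf
    obtain ⟨hAdm, hacE, hnac⟩ := mem_Dset.1 hf
    obtain ⟨P1, P2, _, _⟩ := forward_props hj hAdm hacE hnac
    exact Finset.mem_sigma.2 ⟨mem_Hset.2 P1, Finset.mem_filter.2 ⟨Finset.mem_univ _, P2⟩⟩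
  · rintro ⟨h, g⟩ hp
    obtain ⟨hH, hG⟩ := Finset.mem_sigma.1 hp
    obtain ⟨B1, _, _⟩ := backward_props hj (mem_Hset.1 hH) (Finset.mem_filter.1 hG).2
    exact mem_Dset.2 B1
  · intro f hf
    obtain ⟨hAdm, hacE, hnac⟩ := mem_Dset.1 hf
    exact (forward_props hj hAdm hacE hnac).2.2.1
  · rintro ⟨h, g⟩ hp
    obtain ⟨hH, hG⟩ := Finset.mem_sigma.1 hp
    obtain ⟨_, B2, B3⟩ := backward_props hj (mem_Hset.1 hH) (Finset.mem_filter.1 hG).2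
    show (⟨hpart j (combine h g), gpart j (combine h g)⟩ :
      Σ _ : Fin n → Fin n, Fin n → Fin n) = ⟨h, g⟩
    rw [B2, B3]
  · intro f hf
    obtain ⟨hAdm, hacE, hnac⟩ := mem_Dset.1 hf
    exact (forward_props hj hAdm hacE hnac).2.2.2

lemma key_poly (hj : j ∈ I) :
    Ynum E {j} * Ynum E (I.erase j) = Ynum E I + ∑ h ∈ Hset E I j,
      (∏ i ∈ csupp h, X (Sum.inr (h i))) * Ynum E (I \ csupp h) := by
  classical
  rw [R1 hj, R2, R3 hj]

end KeyPoly
section FieldLevel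

open Finset Function

variable {n : ℕ} {E : Fin n → Fin n → Prop} {I : Finset (Fin n)} {j : Fin n}

lemma XX_ne_zero (i : Fin n) : (XX i : Kn n) ≠ 0 := by
  unfold XX
  rw [map_ne_zero_iff _ (IsFractionRing.injective (MvPolynomial (Fin n ⊕ Fin n) ℤ) (Kn n))]
  exact MvPolynomial.X_ne_zero _

lemma prodXX_ne_zero (J : Finset (Fin n)) : (∏ i ∈ J, XX i : Kn n) ≠ 0 :=
  Finset.prod_ne_zero_iff.2 fun i _ => XX_ne_zero i

lemma eval_Ynum : MvPolynomial.eval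
    (Sum.elim (fun _ => (1 : ℤ)) (fun _ => (0 : ℤ))) (Ynum E I) = 1 := by
  classical
  rw [Ynum_eq, map_sum, Finset.sum_eq_single id]
  · have hcond : Fcond E I id :=
      ⟨⟨fun _ _ => rfl, fun i _ => Or.inl rfl⟩, fun i _ k _ _ _ => rfl⟩
    rw [if_pos hcond]
    unfold wgt
    rw [map_prod]
    refine Finset.prod_eq_one fun i _ => ?_
    rw [if_pos (show id i = i from rfl), MvPolynomial.eval_X]
    rfl
  · intro f _ hfne
    by_cases hcond : Fcond E I f
    · obtain ⟨i, hi⟩ := Function.ne_iff.1 hfne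
      have hiI : i ∈ I := by
        by_contra hiI
        exact hi (hcond.1.1 i hiI)
      rw [if_pos hcond]
      unfold wgt
      rw [map_prod]
      refine Finset.prod_eq_zero hiI ?_
      have hi' : f i ≠ i := hi
      rw [if_neg hi', MvPolynomial.eval_X]
      rfl
    · rw [if_neg hcond, map_zero]
  · intro h
    exact absurd (Finset.mem_univ id) h

lemma Ynum_ne_zero : Ynum E I ≠ 0 := by
  intro h
  have := eval_Ynum (E := E) (I := I)
  rw [h, map_zero] at this
  exact one_ne_zero (α := ℤ) this.symm

lemma YY_ne_zero : YY E I ≠ 0 := by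
  unfold YY
  refine div_ne_zero ?_ (prodXX_ne_zero I)
  rw [map_ne_zero_iff _ (IsFractionRing.injective (MvPolynomial (Fin n ⊕ Fin n) ℤ) (Kn n))]
  exact Ynum_ne_zero

lemma Ynum_empty : Ynum E (∅ : Finset (Fin n)) = 1 := by
  classical
  rw [Ynum_eq, Finset.sum_eq_single id]
  · have hcond : Fcond E (∅ : Finset (Fin n)) id :=
      ⟨⟨fun _ _ => rfl, fun i hi => absurd hi (Finset.notMem_empty i)⟩,
        fun i hi => absurd hi (Finset.notMem_empty i)⟩
    rw [if_pos hcond]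
    unfold wgt
    rw [Finset.prod_empty]
  · intro f _ hfne
    obtain ⟨i, hi⟩ := Function.ne_iff.1 hfne
    refine if_neg fun hc => hi (hc.1.1 i (Finset.notMem_empty i))
  · intro h
    exact absurd (Finset.mem_univ id) h

lemma YY_empty : YY E (∅ : Finset (Fin n)) = 1 := by
  unfold YY
  rw [Ynum_empty, map_one, Finset.prod_empty, div_one]

lemma key_YY (hj : j ∈ I) :
    YY E {j} * YY E (I.erase j) = YY E I + ∑ h ∈ Hset E I j, YY E (I \ csupp h) := by
  classical
  unfold YY
  rw [div_mul_div_comm, ← map_mul, key_poly hj, map_add, map_sum, add_div, Finset.sum_div]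
  refine congrArg₂ (· + ·) ?_ ?_
  · rw [Finset.prod_singleton, Finset.mul_prod_erase I XX hj]
  · apply Finset.sum_congr rfl
    intro h hH
    have hc : CycF E I j h := mem_Hset.1 hH
    rw [Finset.prod_singleton, Finset.mul_prod_erase I XX hj, map_mul]
    have hcoef : (algebraMap (MvPolynomial (Fin n ⊕ Fin n) ℤ) (Kn n))
        (∏ i ∈ csupp h, X (Sum.inr (h i))) = ∏ i ∈ csupp h, XX i := by
      rw [map_prod]
      exact hc.prod_comp XX
    rw [hcoef, ← Finset.prod_sdiff hc.2.2.2 (f := XX),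
      mul_comm (∏ i ∈ csupp h, XX i) _, mul_div_mul_right _ _ (prodXX_ne_zero _)]

end FieldLevel
section Final

open Finset Function

variable {n : ℕ} {E : Fin n → Fin n → Prop}

lemma lemA {K : Subfield (Kn n)} :
    ∀ (N : ℕ) (I : Finset (Fin n)), I.card ≤ N →
      (∀ i ∈ I, YY E {i} ∈ K) → YY E I ∈ K := by
  intro N
  induction N with
  | zero =>
    intro I hcard _
    obtain rfl := Finset.card_eq_zero.1 (Nat.le_zero.1 hcard)
    rw [YY_empty]
    exact one_mem K
  | succ N ih =>
    intro I hcard hsing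
    rcases I.eq_empty_or_nonempty with rfl | ⟨j, hj⟩
    · rw [YY_empty]; exact one_mem K
    · have hId : YY E I = YY E {j} * YY E (I.erase j)
          - ∑ h ∈ Hset E I j, YY E (I \ csupp h) := by
        rw [eq_sub_iff_add_eq]
        exact (key_YY hj).symm
      have hce : (I.erase j).card ≤ N := by
        rw [Finset.card_erase_of_mem hj]
        omega
      rw [hId]
      refine sub_mem (mul_mem (hsing j hj)
        (ih _ hce fun i hi => hsing i (Finset.mem_of_mem_erase hi))) (sum_mem ?_)
      intro h hH
      have hsub : I \ csupp h ⊆ I.erase j := by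
        intro v hv
        obtain ⟨hvI, hvc⟩ := Finset.mem_sdiff.1 hv
        exact Finset.mem_erase.2 ⟨fun he => hvc (he ▸ (mem_Hset.1 hH).j_mem), hvI⟩
      refine ih _ (le_trans (Finset.card_le_card hsub) hce) ?_
      intro i hi
      exact hsing i (Finset.mem_of_mem_erase (hsub hi))

lemma lemB {𝒮 : Finset (Finset (Fin n))} (h𝒮 : MaximalNested E 𝒮) :
    ∀ (N : ℕ) (T : Finset (Fin n)), T ∈ 𝒮 → T.card ≤ N → ∀ i ∈ T,
      YY E {i} ∈ Subfield.closure {y : Kn n | ∃ T ∈ 𝒮, y = YY E T} := by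
  set K := Subfield.closure {y : Kn n | ∃ T ∈ 𝒮, y = YY E T} with hK
  intro N
  induction N with
  | zero =>
    intro T _ hcard i hi
    have : 0 < T.card := Finset.card_pos.2 ⟨i, hi⟩
    omega
  | succ N ih =>
    intro T hT hcard i hi
    obtain ⟨j, hjT, hcov⟩ := exists_pivot h𝒮 hT
    have hsing : ∀ v ∈ T.erase j, YY E {v} ∈ K := by
      intro v hv
      obtain ⟨T', hT', hvT', hT'T⟩ := hcov v (Finset.mem_of_mem_erase hv)
        (Finset.mem_erase.1 hv).1
      refine ih T' hT' ?_ v hvT'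
      have := Finset.card_lt_card hT'T
      omega
    by_cases hij : i = j
    · subst hij
      have hTK : YY E T ∈ K := Subfield.subset_closure ⟨T, hT, rfl⟩
      have h1 : YY E (T.erase i) ∈ K := lemA (T.erase i).card _ le_rfl hsing
      have h1ne : YY E (T.erase i) ≠ 0 := YY_ne_zero
      have h2 : (∑ h ∈ Hset E T i, YY E (T \ csupp h)) ∈ K := by
        refine sum_mem fun h hH => ?_
        refine lemA (T \ csupp h).card _ le_rfl ?_
        intro v hv
        obtain ⟨hvT, hvnc⟩ := Finset.mem_sdiff.1 hv
        exact hsing v (Finset.mem_erase.2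
          ⟨fun he => hvnc (he ▸ (mem_Hset.1 hH).j_mem), hvT⟩)
      have heq : YY E {i} = (YY E T + ∑ h ∈ Hset E T i, YY E (T \ csupp h))
          / YY E (T.erase i) := by
        rw [eq_div_iff h1ne]
        exact key_YY hjT
      rw [heq]
      exact div_mem (add_mem hTK h2) h1
    · exact hsing i (Finset.mem_erase.2 ⟨hij, hi⟩)

end Final
/-- If `𝒮` is a maximal nested collection with support `S`, then every `Y_I` with
`∅ ≠ I ⊆ S` is a rational function with integer coefficients of the `Y_T`, `T ∈ 𝒮`:
it lies in the subfield of the ambient field generated by `{Y_T : T ∈ 𝒮}`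
(the fraction field of `ℤ[Y_T : T ∈ 𝒮]`). -/
theorem stmt14 (n : ℕ) (E : Fin n → Fin n → Prop) (hE : ∀ i, ¬ E i i)
    (𝒮 : Finset (Finset (Fin n))) (h𝒮 : MaximalNested E 𝒮)
    (I : Finset (Fin n)) (hI : I.Nonempty) (hIS : I ⊆ nsupport 𝒮) :
    YY E I ∈ Subfield.closure {y : Kn n | ∃ T ∈ 𝒮, y = YY E T} := by
  refine lemA I.card I le_rfl ?_
  intro i hi
  obtain ⟨T, hT, hiT⟩ := Finset.mem_sup.1 (hIS hi)
  exact lemB h𝒮 T.card T hT le_rfl i hiT
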